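/- arXiv:2506.11848 — 8 statements merged into one kernel-verified Lean document; each statement's English description precedes it below -/
import Mathlib

section
/- Let $v_1,\ldots,v_T$ be vectors in an inner product space with $\|v_t\| \leq M$ for all $t$, and suppose $\langle v_t, \sum_{s=1}^{t-1} v_s \rangle \leq 0$ for every $t$. Then $\left\|\frac{1}{T}\sum_{t=1}^T v_t\right\| \leq \frac{M}{\sqrt{T}}$. -/
theorem aux_sumsq {E : Type*} [NormedAddCommGroup E] [InnerProductSpace ℝ E]
    (v : ℕ → E) (M : ℝ) (hM0 : 0 ≤ M) :
    ∀ T : ℕ, (∀ t < T, ‖v t‖ ≤ M) →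
      (∀ t < T, inner ℝ (v t) (∑ s ∈ Finset.range t, v s) ≤ (0 : ℝ)) →
      ‖∑ t ∈ Finset.range T, v t‖ ^ 2 ≤ T * M ^ 2 := by
  intro T
  induction T with
  | zero => simp
  | succ n ih =>
    intro hM h
    rw [Finset.sum_range_succ]
    have key : ‖∑ t ∈ Finset.range n, v t + v n‖ ^ 2
        = ‖∑ t ∈ Finset.range n, v t‖ ^ 2
          + 2 * inner ℝ (∑ t ∈ Finset.range n, v t) (v n) + ‖v n‖ ^ 2 := by
      rw [@norm_add_sq_real]
    rw [key]
    have h1 : ‖∑ t ∈ Finset.range n, v t‖ ^ 2 ≤ n * M ^ 2 :=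
      ih (fun t ht => hM t (ht.trans (Nat.lt_succ_self n)))
        (fun t ht => h t (ht.trans (Nat.lt_succ_self n)))
    have h2 : inner ℝ (∑ t ∈ Finset.range n, v t) (v n) ≤ (0 : ℝ) := by
      rw [real_inner_comm]; exact h n (Nat.lt_succ_self n)
    have h3 : ‖v n‖ ^ 2 ≤ M ^ 2 :=
      pow_le_pow_left₀ (norm_nonneg _) (hM n (Nat.lt_succ_self n)) 2
    push_cast
    nlinarith

/-- Defensive Forecasting meta-bound. -/
theorem stmt_2 {E : Type*} [NormedAddCommGroup E] [InnerProductSpace ℝ E]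
    (T : ℕ) (hT : 0 < T) (v : ℕ → E) (M : ℝ)
    (hM : ∀ t < T, ‖v t‖ ≤ M)
    (h : ∀ t < T, inner ℝ (v t) (∑ s ∈ Finset.range t, v s) ≤ (0 : ℝ)) :
    ‖(1 / T : ℝ) • ∑ t ∈ Finset.range T, v t‖ ≤ M / Real.sqrt T := by
  have hM0 : 0 ≤ M := (norm_nonneg _).trans (hM 0 hT)
  have hsq := aux_sumsq v M hM0 T hM h
  have hT' : (0 : ℝ) < T := by exact_mod_cast hT
  have hs : Real.sqrt T > 0 := Real.sqrt_pos.2 hT'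
  have hnorm : ‖∑ t ∈ Finset.range T, v t‖ ≤ Real.sqrt T * M := by
    have : (Real.sqrt T * M) ^ 2 = T * M ^ 2 := by
      rw [mul_pow, Real.sq_sqrt hT'.le]
    nlinarith [norm_nonneg (∑ t ∈ Finset.range T, v t),
      mul_nonneg (Real.sqrt_nonneg (T:ℝ)) hM0]
  rw [norm_smul]
  have : ‖(1 / T : ℝ)‖ = 1 / T := by
    rw [Real.norm_eq_abs, abs_of_pos (by positivity)]
  rw [this, one_div, inv_mul_eq_div, div_le_div_iff₀ hT' hs]
  calc ‖∑ t ∈ Finset.range T, v t‖ * Real.sqrt T ≤ (Real.sqrt T * M) * Real.sqrt T := by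
        apply mul_le_mul_of_nonneg_right hnorm hs.le
    _ = M * ((Real.sqrt T)*(Real.sqrt T)) := by ring
    _ = M * T := by rw [Real.mul_self_sqrt hT'.le]
end

section
/- Fix $\lambda \in [0,2]$ and $f \in [0,1]$. For all $p \in [0,1]$: $p \exp(\lambda[(p-1)^2 - (f-1)^2]) + (1-p)\exp(\lambda[p^2 - f^2]) \leq 1$. -/
open Real

private lemma hoeff_d_pos (p : ℝ) (hp0 : 0 ≤ p) (hp1 : p ≤ 1) (s : ℝ) :
    0 < 1 - p + p * Real.exp s := by
  rcases lt_or_eq_of_le hp1 with h | h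
  · have : 0 ≤ p * Real.exp s := mul_nonneg hp0 (Real.exp_pos s).le
    linarith
  · subst h; simpa using Real.exp_pos s

/-- Hoeffding's lemma for a Bernoulli random variable. -/
private lemma hoeff (p : ℝ) (hp0 : 0 ≤ p) (hp1 : p ≤ 1) (s : ℝ) :
    1 - p + p * Real.exp s ≤ Real.exp (p * s + s ^ 2 / 8) := by
  set d : ℝ → ℝ := fun s => 1 - p + p * Real.exp s with hd_def
  have hd : ∀ s, 0 < d s := hoeff_d_pos p hp0 hp1
  set g : ℝ → ℝ := fun s => p * s + s ^ 2 / 8 - Real.log (d s) with hg_def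
  set g' : ℝ → ℝ := fun s => p + s / 4 - p * Real.exp s / d s with hg'_def
  -- derivative facts
  have hdd : ∀ s, HasDerivAt d (p * Real.exp s) s := by
    intro s
    exact ((Real.hasDerivAt_exp s).const_mul p).const_add (1 - p)
  have hgd : ∀ s, HasDerivAt g (g' s) s := by
    intro s
    have hlog : HasDerivAt (fun s => Real.log (d s)) (p * Real.exp s / d s) s :=
      (hdd s).log (hd s).ne'
    have h1 : HasDerivAt (fun s => p * s + s ^ 2 / 8) (p + s / 4) s := by
      have := ((hasDerivAt_pow 2 s).div_const 8).const_add (p * s)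
      have h2 : HasDerivAt (fun x : ℝ => p * x) p s := by
        simpa using (hasDerivAt_id s).const_mul p
      have := h2.add ((hasDerivAt_pow 2 s).div_const 8)
      exact this.congr_deriv (by norm_num; ring)
    exact h1.sub hlog
  have hg'd : ∀ s, HasDerivAt g' (1 / 4 - p * Real.exp s * (1 - p) / (d s) ^ 2) s := by
    intro s
    have hquot : HasDerivAt (fun s => p * Real.exp s / d s)
        ((p * Real.exp s * d s - p * Real.exp s * (p * Real.exp s)) / (d s) ^ 2) s :=
      ((Real.hasDerivAt_exp s).const_mul p).div (hdd s) (hd s).ne'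
    have h1 : HasDerivAt (fun s => p + s / 4) (1 / 4) s := by
      simpa using ((hasDerivAt_id s).div_const 4).const_add p
    have hnum : p * Real.exp s * d s - p * Real.exp s * (p * Real.exp s)
        = p * Real.exp s * (1 - p) := by simp only [d]; ring
    rw [hnum] at hquot
    exact h1.sub hquot
  -- g' has nonnegative derivative, hence monotone
  have hg''nonneg : ∀ s, 0 ≤ 1 / 4 - p * Real.exp s * (1 - p) / (d s) ^ 2 := by
    intro s
    have h1 : p * Real.exp s * (1 - p) / (d s) ^ 2 ≤ 1 / 4 := by
      rw [div_le_iff₀ (pow_pos (hd s) 2)]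
      have : (d s) ^ 2 = ((1 - p) + p * Real.exp s) ^ 2 := by simp [d]
      nlinarith [sq_nonneg ((1 - p) - p * Real.exp s)]
    linarith
  have hg'mono : Monotone g' := by
    apply monotone_of_deriv_nonneg
    · exact fun s => (hg'd s).differentiableAt
    · intro s
      rw [(hg'd s).deriv]
      exact hg''nonneg s
  have hg'0 : g' 0 = 0 := by
    simp [g', d]
  -- g 0 = 0
  have hg0 : g 0 = 0 := by
    simp [g, d]
  -- g s ≥ 0 for all s
  have hgnonneg : ∀ s, 0 ≤ g s := by
    intro s
    rcases le_or_gt 0 s with hs | hs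
    · have hmono : MonotoneOn g (Set.Ici (0 : ℝ)) := by
        apply monotoneOn_of_deriv_nonneg (convex_Ici 0)
        · exact fun x _ => ((hgd x).differentiableAt).continuousAt.continuousWithinAt
        · exact fun x _ => ((hgd x).differentiableAt).differentiableWithinAt
        · intro x hx
          rw [(hgd x).deriv]
          rw [interior_Ici] at hx
          calc (0 : ℝ) = g' 0 := hg'0.symm
            _ ≤ g' x := hg'mono hx.le
      have := hmono (Set.self_mem_Ici) hs hs
      linarith [hg0]
    · have hanti : AntitoneOn g (Set.Iic (0 : ℝ)) := by
        apply antitoneOn_of_deriv_nonpos (convex_Iic 0)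
        · exact fun x _ => ((hgd x).differentiableAt).continuousAt.continuousWithinAt
        · exact fun x _ => ((hgd x).differentiableAt).differentiableWithinAt
        · intro x hx
          rw [(hgd x).deriv]
          rw [interior_Iic] at hx
          calc g' x ≤ g' 0 := hg'mono hx.le
            _ = 0 := hg'0
      have := hanti (Set.mem_Iic.mpr hs.le) (Set.self_mem_Iic) hs.le
      linarith [hg0]
    
  have := hgnonneg s
  have hlog : Real.log (d s) ≤ p * s + s ^ 2 / 8 := by
    simp only [g] at this; linarith
  calc 1 - p + p * Real.exp s = d s := rfl
    _ = Real.exp (Real.log (d s)) := (Real.exp_log (hd s)).symm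
    _ ≤ Real.exp (p * s + s ^ 2 / 8) := Real.exp_le_exp.mpr hlog

/-- Exponential boundedness for squared-loss gap functions. -/
theorem stmt_8 (lam f p : ℝ) (hlam : lam ∈ Set.Icc (0 : ℝ) 2)
    (hf : f ∈ Set.Icc (0 : ℝ) 1) (hp : p ∈ Set.Icc (0 : ℝ) 1) :
    p * Real.exp (lam * ((p - 1) ^ 2 - (f - 1) ^ 2)) +
      (1 - p) * Real.exp (lam * (p ^ 2 - f ^ 2)) ≤ 1 := by
  obtain ⟨hl0, hl2⟩ := hlam
  obtain ⟨hf0, hf1⟩ := hf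
  obtain ⟨hp0, hp1⟩ := hp
  set t : ℝ := lam * (p - f) with ht
  -- rewrite exponents
  have e1 : lam * ((p - 1) ^ 2 - (f - 1) ^ 2) = t * (p + f) + (-2 * t) := by
    simp [ht]; ring
  have e0 : lam * (p ^ 2 - f ^ 2) = t * (p + f) := by
    simp [ht]; ring
  rw [e1, e0, Real.exp_add]
  have key : p * Real.exp (-2 * t) + (1 - p) ≤ Real.exp (p * (-2 * t) + (-2 * t) ^ 2 / 8) := by
    have := hoeff p hp0 hp1 (-2 * t)
    linarith
  have hstep : p * (Real.exp (t * (p + f)) * Real.exp (-2 * t)) +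
      (1 - p) * Real.exp (t * (p + f))
      = Real.exp (t * (p + f)) * (p * Real.exp (-2 * t) + (1 - p)) := by ring
  rw [hstep]
  have h2 : Real.exp (t * (p + f)) * (p * Real.exp (-2 * t) + (1 - p)) ≤
      Real.exp (t * (p + f)) * Real.exp (p * (-2 * t) + (-2 * t) ^ 2 / 8) :=
    mul_le_mul_of_nonneg_left key (Real.exp_pos _).le
  refine h2.trans ?_
  rw [← Real.exp_add]
  have hexp : t * (p + f) + (p * (-2 * t) + (-2 * t) ^ 2 / 8)
      = lam * (lam / 2 - 1) * (p - f) ^ 2 := by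
    simp [ht]; ring
  rw [hexp]
  have : lam * (lam / 2 - 1) * (p - f) ^ 2 ≤ 0 := by
    have h1 : (0:ℝ) ≤ 1 - lam / 2 := by linarith
    nlinarith [mul_nonneg (mul_nonneg hl0 h1) (sq_nonneg (p - f))]
  calc Real.exp (lam * (lam / 2 - 1) * (p - f) ^ 2) ≤ Real.exp 0 :=
        Real.exp_le_exp.mpr this
    _ = 1 := Real.exp_zero
end

section
/- Let $F_1,\ldots,F_N : \mathcal{X} \times [0,1] \times \{0,1\} \to \mathbb{R}$ satisfy $p e^{F_j(x,p,1)} + (1-p)e^{F_j(x,p,0)} \leq 1$ for all $j, x, p$, and suppose each $F_j(x,p,y)$ is continuous in $p$. Suppose at each round $t$ the prediction $p_t$ satisfies $\sup_{y \in \{0,1\}} \sum_{j=1}^N \alpha_{jt} \exp(F_j(x_t,p_t,y)) \leq \sum_{j=1}^N \alpha_{jt} \left[p_t \exp(F_j(x_t,p_t,1)) + (1-p_t)\exp(F_j(x_t,p_t,0))\right]$, where $\alpha_{jt} \propto \exp(\sum_{s<t} F_j(x_s,p_s,y_s))$. Then for any outcome sequence $y_1,\ldots,y_T \in \{0,1\}$,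 $\max_{1 \leq j \leq N} \sum_{t=1}^T F_j(x_t,p_t,y_t) \leq \log N$. -/
open Finset in
/-- ℓ∞ Defensive Forecasting via the soft-max potential. -/
theorem stmt_10 {X : Type*} (N T : ℕ) (hN : 0 < N)
    (F : Fin N → X → ℝ → ℝ → ℝ)
    (hcont : ∀ j x y, Continuous fun p => F j x p y)
    (hbound : ∀ j x p, p ∈ Set.Icc (0 : ℝ) 1 →
      p * Real.exp (F j x p 1) + (1 - p) * Real.exp (F j x p 0) ≤ 1)
    (x : ℕ → X) (p y : ℕ → ℝ)
    (hp : ∀ t, p t ∈ Set.Icc (0 : ℝ) 1)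
    (hy : ∀ t, y t = 0 ∨ y t = 1)
    (α : Fin N → ℕ → ℝ)
    (hα : ∀ j t, α j t =
      Real.exp (∑ s ∈ range t, F j (x s) (p s) (y s)) /
        ∑ j' : Fin N, Real.exp (∑ s ∈ range t, F j' (x s) (p s) (y s)))
    (hpred : ∀ t, ∀ y' ∈ ({0, 1} : Set ℝ),
      ∑ j : Fin N, α j t * Real.exp (F j (x t) (p t) y') ≤
        ∑ j : Fin N, α j t *
          (p t * Real.exp (F j (x t) (p t) 1) +
            (1 - p t) * Real.exp (F j (x t) (p t) 0))) :
    ∀ j : Fin N, ∑ t ∈ range T, F j (x t) (p t) (y t) ≤ Real.log N := by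
  set V : ℕ → ℝ := fun t => ∑ j : Fin N, Real.exp (∑ s ∈ range t, F j (x s) (p s) (y s))
    with hV
  have hVpos : ∀ t, 0 < V t := by
    intro t
    apply Finset.sum_pos (fun j _ => Real.exp_pos _)
    exact Finset.univ_nonempty_iff.mpr ⟨⟨0, hN⟩⟩
  have hαnn : ∀ j t, 0 ≤ α j t := by
    intro j t
    rw [hα]
    positivity
  have hαsum : ∀ t, ∑ j : Fin N, α j t = 1 := by
    intro t
    simp only [hα]
    rw [← Finset.sum_div]
    exact div_self (hVpos t).ne'
  have hstep : ∀ t, V (t + 1) ≤ V t := by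
    intro t
    have key : ∑ j : Fin N, α j t * Real.exp (F j (x t) (p t) (y t)) ≤ 1 := by
      have h1 := hpred t (y t) (by rcases hy t with h | h <;> simp [h])
      have h2 : ∑ j : Fin N, α j t *
          (p t * Real.exp (F j (x t) (p t) 1) +
            (1 - p t) * Real.exp (F j (x t) (p t) 0)) ≤ ∑ j : Fin N, α j t := by
        apply Finset.sum_le_sum
        intro j _
        nth_rewrite 2 [← mul_one (α j t)]
        exact mul_le_mul_of_nonneg_left (hbound j (x t) (p t) (hp t)) (hαnn j t)
      calc _ ≤ _ := h1
        _ ≤ ∑ j : Fin N, α j t := h2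
        _ = 1 := hαsum t
    have hVrw : V (t + 1) = V t * ∑ j : Fin N, α j t * Real.exp (F j (x t) (p t) (y t)) := by
      rw [hV, Finset.mul_sum]
      apply Finset.sum_congr rfl
      intro j _
      rw [Finset.sum_range_succ, Real.exp_add, hα]
      field_simp
      exact (div_self (hVpos t).ne').symm
    rw [hVrw]
    calc V t * ∑ j : Fin N, α j t * Real.exp (F j (x t) (p t) (y t))
        ≤ V t * 1 := mul_le_mul_of_nonneg_left key (hVpos t).le
      _ = V t := mul_one _
  have hVle : ∀ t, V t ≤ N := by
    intro t
    induction t with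
    | zero => simp [hV]
    | succ n ih => exact (hstep n).trans ih
  intro j
  have h1 : Real.exp (∑ t ∈ range T, F j (x t) (p t) (y t)) ≤ N := by
    calc Real.exp (∑ t ∈ range T, F j (x t) (p t) (y t))
        ≤ V T := Finset.single_le_sum (fun (i : Fin N) _ => (Real.exp_pos (∑ t ∈ range T, F i (x t) (p t) (y t))).le) (Finset.mem_univ j)
      _ ≤ N := hVle T
  calc (∑ t ∈ range T, F j (x t) (p t) (y t))
      = Real.log (Real.exp (∑ t ∈ range T, F j (x t) (p t) (y t))) := (Real.log_exp _).symm
    _ ≤ Real.log N := Real.log_le_log (Real.exp_pos _) h1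
end

section
/- Fix $q \in [0,1]$. Define $x_1 = 0$ and $x_{t+1} = (1 - 1/t)x_t + (1/t)\mathbf{1}\{x_t \leq q\}$ for $t \geq 1$. Then for all $T \geq 2$, $|x_T - q| \leq \frac{\max\{q, 1-q\}}{T-1}$. -/
/-- The deterministic quantile recursion converges at rate 1/(T-1). -/
theorem stmt_12 (q : ℝ) (hq : q ∈ Set.Icc (0 : ℝ) 1) (x : ℕ → ℝ)
    (hx1 : x 1 = 0)
    (hrec : ∀ t : ℕ, 1 ≤ t →
      x (t + 1) = (1 - 1 / t) * x t + (1 / t) * (if x t ≤ q then 1 else 0)) :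
    ∀ T : ℕ, 2 ≤ T → |x T - q| ≤ max q (1 - q) / ((T : ℝ) - 1) := by
  obtain ⟨hq0, hq1⟩ := hq
  set M := max q (1 - q) with hM
  have hMq : q ≤ M := le_max_left _ _
  have hMq' : 1 - q ≤ M := le_max_right _ _
  have hM0 : 0 ≤ M := le_trans hq0 hMq
  intro T hT
  induction T, hT using Nat.le_induction with
  | base =>
    have h := hrec 1 le_rfl
    rw [hx1, if_pos hq0] at h
    norm_num at h
    rw [h]
    have : ((2 : ℕ) : ℝ) - 1 = 1 := by norm_num
    rw [this, div_one, abs_of_nonneg (by linarith)]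
    linarith
  | succ t ht ih =>
    have hd2 : (2 : ℝ) ≤ (t : ℝ) := by exact_mod_cast ht
    have hd0 : (0 : ℝ) < (t : ℝ) := by linarith
    have hd1 : (0 : ℝ) < (t : ℝ) - 1 := by linarith
    obtain ⟨h1, h2⟩ := abs_le.mp ih
    have hdm : M / ((t : ℝ) - 1) * ((t : ℝ) - 1) = M :=
      div_mul_cancel₀ _ (ne_of_gt hd1)
    have hr := hrec t (by omega)
    have hgoal : (((t : ℕ) + 1 : ℕ) : ℝ) - 1 = (t : ℝ) := by push_cast; ring
    rw [hgoal]
    by_cases hc : x t ≤ q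
    · rw [if_pos hc] at hr
      have key : x (t + 1) - q = (((t : ℝ) - 1) * (x t - q) + (1 - q)) / t := by
        rw [hr]; field_simp; ring
      rw [key, abs_div, abs_of_pos hd0, div_le_div_iff_of_pos_right hd0]
      rw [abs_le]
      constructor
      · have := mul_le_mul_of_nonneg_left h1 (le_of_lt hd1)
        nlinarith
      · nlinarith
    · rw [if_neg hc] at hr
      push_neg at hc
      have key : x (t + 1) - q = (((t : ℝ) - 1) * (x t - q) - q) / t := by
        rw [hr]; field_simp; ring
      rw [key, abs_div, abs_of_pos hd0, div_le_div_iff_of_pos_right hd0]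
      rw [abs_le]
      constructor
      · nlinarith
      · have := mul_le_mul_of_nonneg_left h2 (le_of_lt hd1)
        nlinarith
end

section
/- For the quantile Defensive Forecasting strategy (predict $p_t = Y_{\max}$ if $\sum_{i<t}(\mathbf{1}\{y_i \leq p_i\} - q) \leq 0$ and $p_t = Y_{\min}$ otherwise, where $y_t \in (Y_{\min}, Y_{\max}]$), for every $t$ and every $y \in (Y_{\min}, Y_{\max}]$, $(\mathbf{1}\{y \leq p_t\} - q)\sum_{i=1}^{t-1}(\mathbf{1}\{y_i \leq p_i\} - q) \leq 0$, and consequently $\left(\sum_{t=1}^T \mathbf{1}\{y_t \leq p_t\} - qT\right)^2 \leq T$. -/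
open Finset in
/-- Quantile Defensive Forecasting: anticorrelation and the squared-sum bound. -/
theorem stmt_13 (Ymin Ymax q : ℝ) (hY : Ymin < Ymax) (hq : q ∈ Set.Icc (0 : ℝ) 1)
    (y : ℕ → ℝ) (hy : ∀ t, y t ∈ Set.Ioc Ymin Ymax)
    (p : ℕ → ℝ)
    (hp : ∀ t, p t =
      if (∑ i ∈ range t, ((if y i ≤ p i then (1 : ℝ) else 0) - q)) ≤ 0
      then Ymax else Ymin) :
    (∀ t, ∀ y' ∈ Set.Ioc Ymin Ymax,
      ((if y' ≤ p t then (1 : ℝ) else 0) - q) *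
        ∑ i ∈ range t, ((if y i ≤ p i then (1 : ℝ) else 0) - q) ≤ 0) ∧
    ∀ T : ℕ,
      ((∑ t ∈ range T, (if y t ≤ p t then (1 : ℝ) else 0)) - q * T) ^ 2 ≤ T := by
  obtain ⟨hq0, hq1⟩ := hq
  set S : ℕ → ℝ := fun t => ∑ i ∈ range t, ((if y i ≤ p i then (1 : ℝ) else 0) - q)
    with hS
  have key : ∀ t, ∀ y' ∈ Set.Ioc Ymin Ymax,
      ((if y' ≤ p t then (1 : ℝ) else 0) - q) * S t ≤ 0 := by
    intro t y' hy'
    by_cases h : S t ≤ 0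
    · have hpt : p t = Ymax := by rw [hp t]; exact if_pos h
      have : y' ≤ p t := hpt ▸ hy'.2
      rw [if_pos this]
      nlinarith
    · have hpt : p t = Ymin := by rw [hp t]; exact if_neg h
      have : ¬ y' ≤ p t := by rw [hpt]; exact not_le.2 hy'.1
      rw [if_neg this]
      have := le_of_not_ge h
      nlinarith
  refine ⟨key, fun T => ?_⟩
  have hrw : ∀ T : ℕ, (∑ t ∈ range T, (if y t ≤ p t then (1 : ℝ) else 0)) - q * T
      = S T := by
    intro T
    rw [hS]
    simp [Finset.sum_sub_distrib, mul_comm]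
  rw [hrw]
  induction T with
  | zero => simp [hS]
  | succ n ih =>
    have hstep : S (n + 1) = S n + ((if y n ≤ p n then (1 : ℝ) else 0) - q) := by
      simp only [hS]; rw [Finset.sum_range_succ]
    have hkey := key n (y n) (hy n)
    have hbd : ((if y n ≤ p n then (1 : ℝ) else 0) - q) ^ 2 ≤ 1 := by
      by_cases h : y n ≤ p n <;> simp only [h, if_true, if_false] <;> nlinarith
    rw [hstep]
    have : (S n + ((if y n ≤ p n then (1 : ℝ) else 0) - q)) ^ 2
        = S n ^ 2 + 2 * (((if y n ≤ p n then (1 : ℝ) else 0) - q) * S n)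
          + ((if y n ≤ p n then (1 : ℝ) else 0) - q) ^ 2 := by ring
    rw [this]
    push_cast
    linarith
end

section
/- Let $\mathcal{H}$ be a Hilbert space and $\Phi : \mathcal{X} \times [0,1] \to \mathcal{H}$. Suppose predictions satisfy the anticorrelation condition: at each round $t$, $(y_t - p_t)\langle \Phi(x_t,p_t), \sum_{s<t}(y_s - p_s)\Phi(x_s,p_s)\rangle \leq 0$, where $y_t \in \{0,1\}$ and $p_t \in [0,1]$. Then for every $h \in \mathcal{H}$, $\left|\sum_{t=1}^T \langle h, \Phi(x_t,p_t)\rangle (y_t - p_t)\right| \leq \|h\| \sqrt{\sum_{t=1}^T (y_t - p_t)^2 \|\Phi(x_t,p_t)\|^2}$. -/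
open Finset in
/-- Kernelized Defensive Forecasting (Vovk's K29). -/
theorem stmt_15 {X H : Type*} [NormedAddCommGroup H] [InnerProductSpace ℝ H]
    (T : ℕ) (Φ : X → ℝ → H) (x : ℕ → X) (p y : ℕ → ℝ)
    (hp : ∀ t, p t ∈ Set.Icc (0 : ℝ) 1)
    (hy : ∀ t, y t = 0 ∨ y t = 1)
    (hanti : ∀ t < T,
      (y t - p t) *
        inner ℝ (Φ (x t) (p t)) (∑ s ∈ range t, (y s - p s) • Φ (x s) (p s)) ≤ (0 : ℝ)) :
    ∀ h : H,
      |∑ t ∈ range T, inner ℝ h (Φ (x t) (p t)) * (y t - p t)| ≤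
        ‖h‖ * Real.sqrt (∑ t ∈ range T, (y t - p t) ^ 2 * ‖Φ (x t) (p t)‖ ^ 2) := by
  intro h
  set S : ℕ → H := fun n => ∑ s ∈ range n, (y s - p s) • Φ (x s) (p s) with hS
  have key : ∀ n ≤ T, ‖S n‖ ^ 2 ≤ ∑ t ∈ range n, (y t - p t) ^ 2 * ‖Φ (x t) (p t)‖ ^ 2 := by
    intro n hn
    induction n with
    | zero => simp [hS]
    | succ m ih =>
      have hm : m ≤ T := Nat.le_of_succ_le hn
      have ihm := ih hm
      have hSsucc : S (m + 1) = S m + (y m - p m) • Φ (x m) (p m) := by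
        simp [hS, Finset.sum_range_succ, add_comm]
      have hexp : ‖S (m+1)‖ ^ 2 = ‖S m‖ ^ 2 +
          2 * ((y m - p m) * inner ℝ (Φ (x m) (p m)) (S m)) +
          (y m - p m) ^ 2 * ‖Φ (x m) (p m)‖ ^ 2 := by
        rw [hSsucc, @norm_add_sq_real]
        rw [real_inner_smul_right, norm_smul]
        rw [real_inner_comm, Real.norm_eq_abs, mul_pow, sq_abs]
      have hneg := hanti m (Nat.lt_of_succ_le hn)
      rw [Finset.sum_range_succ]
      rw [hexp]
      nlinarith [hneg]
  have hST := key T le_rfl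
  have hsum : ∑ t ∈ range T, (inner ℝ h (Φ (x t) (p t)) : ℝ) * (y t - p t) = inner ℝ h (S T) := by
    rw [hS, inner_sum]
    refine Finset.sum_congr rfl fun t _ => ?_
    rw [real_inner_smul_right]; ring
  rw [hsum]
  calc |(inner ℝ h (S T) : ℝ)| ≤ ‖h‖ * ‖S T‖ := abs_real_inner_le_norm h (S T)
    _ ≤ ‖h‖ * Real.sqrt (∑ t ∈ range T, (y t - p t) ^ 2 * ‖Φ (x t) (p t)‖ ^ 2) := by
        gcongr
        have := Real.sqrt_le_sqrt hST
        rwa [Real.sqrt_sq (norm_nonneg _)] at this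
end

section
/- Let $\Omega$ be a finite set of bounded functions $\omega : \mathcal{X} \times \mathcal{P} \times \mathcal{Y} \to \mathbb{R}$. Suppose an online algorithm run on any sequence produces deterministic prediction functions $f_1, \ldots, f_n$ (where $f_t$ depends only on the history before time $t$) with $\sup_{\omega \in \Omega}|\sum_{t=1}^n \omega(x_t, f_t(x_t), y_t)| \leq \mathcal{R}(n)$. If $(x_1,y_1),\ldots,(x_n,y_n)$ are drawn i.i.d. from a distribution $\mathcal{D}$, and $\mathcal{A}_S$ is the randomized predictor that on input $x$ picks $i$ uniformly from $\{1,\ldots,n\}$ and outputs $f_i(x)$, then $\sup_{\omega \in \Omega}\left|\mathbb{E}_{S \sim \mathcal{D}^n,\,(x,y)\sim\mathcal{D},\,p \sim \mathcal{A}_S(x)}[\omega(x,p,y)]\right| \leq \frac{\mathcal{R}(n)}{n}$. -/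
open MeasureTheory Finset in
/-- Online-to-batch conversion, in-expectation version. -/
theorem stmt_17 {X P Y : Type*} [MeasurableSpace X] [MeasurableSpace Y]
    (D : Measure (X × Y)) [IsProbabilityMeasure D]
    (n : ℕ) (hn : 0 < n)
    (Ω : Finset (X → P → Y → ℝ))
    (hbdd : ∀ ω ∈ Ω, ∃ B : ℝ, ∀ x p y, |ω x p y| ≤ B)
    (A : (t : ℕ) → (Fin t → X × Y) → X → P)
    (hmeas : ∀ ω ∈ Ω, Measurable fun z : (Fin n → X × Y) × (X × Y) =>
      ∑ i : Fin n,
        ω z.2.1 (A i.val (fun j => z.1 (Fin.castLE i.isLt.le j)) z.2.1) z.2.2)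
    (R : ℕ → ℝ)
    (hregret : ∀ s : ℕ → X × Y, ∀ ω ∈ Ω,
      |∑ t ∈ range n, ω (s t).1 (A t (fun i : Fin t => s i.val) (s t).1) (s t).2|
        ≤ R n) :
    ∀ ω ∈ Ω,
      |∫ S : Fin n → X × Y, ∫ xy : X × Y,
          (1 / n : ℝ) * ∑ i : Fin n,
            ω xy.1 (A i.val (fun j => S (Fin.castLE i.isLt.le j)) xy.1) xy.2
          ∂D ∂(Measure.pi fun _ : Fin n => D)| ≤ R n / n := by
  intro ω hω
  classical
  set π : Measure (Fin n → (X × Y)) := Measure.pi fun _ : Fin n => D with hπ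
  set π' : Measure (Fin (n+1) → (X × Y)) := Measure.pi fun _ : Fin (n+1) => D with hπ'
  set g : (Fin n → (X × Y)) × (X × Y) → ℝ := fun z =>
    ∑ i : Fin n,
      ω z.2.1 (A i.val (fun j => z.1 (Fin.castLE i.isLt.le j)) z.2.1) z.2.2 with hgdef
  have hg : Measurable g := hmeas ω hω
  obtain ⟨B, hB⟩ := hbdd ω hω
  have hgb : ∀ z, |g z| ≤ n * B := by
    intro z
    calc |g z| ≤ ∑ i : Fin n,
        |ω z.2.1 (A i.val (fun j => z.1 (Fin.castLE i.isLt.le j)) z.2.1) z.2.2| :=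
          Finset.abs_sum_le_sum_abs _ _
      _ ≤ ∑ _i : Fin n, B := Finset.sum_le_sum fun i _ => hB _ _ _
      _ = n * B := by simp [mul_comm]
  have hInt : Integrable g (π.prod D) :=
    (integrable_const (n * B)).mono' hg.aestronglyMeasurable
      (Filter.Eventually.of_forall fun z => by
        simpa [Real.norm_eq_abs] using hgb z)
  -- the maps m σ
  set m : Equiv.Perm (Fin (n+1)) → (Fin (n+1) → (X × Y)) → (Fin n → (X × Y)) × (X × Y) :=
    fun σ T => (fun j => T (σ j.castSucc), T (σ (Fin.last n))) with hmdef
  have hm_meas : ∀ σ, Measurable (m σ) := fun σ =>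
    (measurable_pi_lambda _ fun j => measurable_pi_apply _).prodMk
      (measurable_pi_apply _)
  have hm_mp : ∀ σ, MeasurePreserving (m σ) π' (π.prod D) := by
    intro σ
    have h1 : MeasurePreserving
        (MeasurableEquiv.piCongrLeft (fun _ : Fin (n+1) => (X × Y)) σ.symm) π' π' :=
      measurePreserving_piCongrLeft (fun _ : Fin (n+1) => D) σ.symm
    have h2 : MeasurePreserving
        (MeasurableEquiv.piFinSuccAbove (fun _ : Fin (n+1) => (X × Y)) (Fin.last n))
        π' (D.prod π) :=
      measurePreserving_piFinSuccAbove (fun _ : Fin (n+1) => D) (Fin.last n)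
    have h3 : MeasurePreserving (Prod.swap : (X × Y) × (Fin n → (X × Y)) → (Fin n → (X × Y)) × (X × Y))
        (D.prod π) (π.prod D) := ⟨measurable_swap, Measure.prod_swap⟩
    have hcomp := (h3.comp h2).comp h1
    have hfun : (Prod.swap ∘
        (MeasurableEquiv.piFinSuccAbove (fun _ : Fin (n+1) => (X × Y)) (Fin.last n)) ∘
        (MeasurableEquiv.piCongrLeft (fun _ : Fin (n+1) => (X × Y)) σ.symm)) = m σ := by
      funext T
      have hpc : ∀ b, (MeasurableEquiv.piCongrLeft (fun _ : Fin (n+1) => (X × Y)) σ.symm) T b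
          = T (σ b) := by
        intro b
        rw [MeasurableEquiv.coe_piCongrLeft]
        have := Equiv.piCongrLeft_apply_apply (fun _ : Fin (n+1) => (X × Y)) σ.symm T (σ b)
        simpa using this
      show Prod.swap ((MeasurableEquiv.piFinSuccAbove (fun _ : Fin (n+1) => (X × Y)) (Fin.last n))
          ((MeasurableEquiv.piCongrLeft (fun _ : Fin (n+1) => (X × Y)) σ.symm) T)) = m σ T
      rw [MeasurableEquiv.piFinSuccAbove_apply]
      refine Prod.ext ?_ ?_
      · funext j
        simp [Fin.insertNthEquiv, Fin.init, hpc, Fin.succAbove_last, hmdef]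
      · simp [Fin.insertNthEquiv, Fin.init, hpc, hmdef]
    rw [← hfun]
    exact hcomp
  -- transport the integral
  have hIσ : ∀ σ, ∫ z, g z ∂(π.prod D) = ∫ T, g (m σ T) ∂π' := by
    intro σ
    rw [← (hm_mp σ).map_eq, integral_map (hm_meas σ).aemeasurable hg.aestronglyMeasurable]
  set c : ℕ := Fintype.card (Equiv.Perm (Fin (n+1))) with hc
  have hcpos : 0 < c := Fintype.card_pos
  have hIntσ : ∀ σ, Integrable (fun T => g (m σ T)) π' := fun σ =>
    (integrable_const (n * B)).mono' (hg.comp (hm_meas σ)).aestronglyMeasurable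
      (Filter.Eventually.of_forall fun T => by
        simpa [Real.norm_eq_abs] using hgb (m σ T))
  have hsum : (c : ℝ) * ∫ z, g z ∂(π.prod D)
      = ∫ T, (∑ σ : Equiv.Perm (Fin (n+1)), g (m σ T)) ∂π' := by
    rw [integral_finset_sum _ fun σ _ => hIntσ σ]
    have : ∀ σ ∈ (univ : Finset (Equiv.Perm (Fin (n+1)))),
        ∫ T, g (m σ T) ∂π' = ∫ z, g z ∂(π.prod D) := fun σ _ => (hIσ σ).symm
    rw [Finset.sum_congr rfl this, Finset.sum_const, Finset.card_univ, nsmul_eq_mul]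
  -- pointwise identity and bound
  have hpt : ∀ T : Fin (n+1) → (X × Y),
      |∑ σ : Equiv.Perm (Fin (n+1)), g (m σ T)| ≤ (c : ℝ) * R n := by
    intro T
    set s : Equiv.Perm (Fin (n+1)) → ℕ → (X × Y) := fun σ t =>
      T (σ (if h : t < n then (⟨t, h⟩ : Fin n).castSucc else Fin.last n)) with hsdef
    have hstep : ∑ σ : Equiv.Perm (Fin (n+1)), g (m σ T)
        = ∑ σ : Equiv.Perm (Fin (n+1)), ∑ t ∈ range n,
            ω (s σ t).1 (A t (fun i : Fin t => s σ i.val) (s σ t).1) (s σ t).2 := by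
      have hrhs : ∀ σ, (∑ t ∈ range n,
            ω (s σ t).1 (A t (fun i : Fin t => s σ i.val) (s σ t).1) (s σ t).2)
          = ∑ i : Fin n,
            ω (s σ i.val).1 (A i.val (fun j : Fin i.val => s σ j.val) (s σ i.val).1)
              (s σ i.val).2 :=
        fun σ => (Fin.sum_univ_eq_sum_range
          (fun t => ω (s σ t).1 (A t (fun i : Fin t => s σ i.val) (s σ t).1) (s σ t).2) n).symm
      simp only [hrhs, hgdef]
      rw [Finset.sum_comm, Finset.sum_comm
        (f := fun σ (i : Fin n) =>
          ω (s σ i.val).1 (A i.val (fun j : Fin i.val => s σ j.val) (s σ i.val).1)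
            (s σ i.val).2)]
      refine Finset.sum_congr rfl fun i _ => ?_
      -- for fixed i, reindex by right multiplication with the swap
      set τ : Equiv.Perm (Fin (n+1)) := Equiv.swap i.castSucc (Fin.last n) with hτ
      refine (Fintype.sum_equiv (Equiv.mulRight τ) _ _ fun σ => ?_).symm
      -- show: regret term of σ equals the g-term of σ * τ
      have hlast : (Equiv.mulRight τ σ) (Fin.last n) = σ i.castSucc := by
        simp [hτ, Equiv.Perm.mul_apply, Equiv.swap_apply_right]
      have hpre : ∀ j : Fin i.val,
          (Equiv.mulRight τ σ) ((Fin.castLE i.isLt.le j).castSucc)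
            = σ ((Fin.castLE i.isLt.le j).castSucc) := by
        intro j
        have h1 : (Fin.castLE i.isLt.le j).castSucc ≠ i.castSucc := by
          intro h
          have := congrArg Fin.val h
          simp at this
          omega
        have h2 : (Fin.castLE i.isLt.le j).castSucc ≠ Fin.last n := by
          intro h
          have := congrArg Fin.val h
          simp [Fin.last] at this
          omega
        show (σ * τ) ((Fin.castLE i.isLt.le j).castSucc) = _
        rw [Equiv.Perm.mul_apply, hτ, Equiv.swap_apply_of_ne_of_ne h1 h2]
      have hsi : s σ i.val = T (σ i.castSucc) := by
        simp only [hsdef, dif_pos i.isLt]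
      have hsj : (fun j : Fin i.val => s σ j.val)
          = fun j : Fin i.val => T (σ ((Fin.castLE i.isLt.le j).castSucc)) := by
        funext j
        have hj : (j : ℕ) < n := lt_trans j.isLt i.isLt
        simp only [hsdef, dif_pos hj]
        congr 1
      simp only [hmdef]
      rw [hsi, hsj, hlast]
      congr 2
      funext j
      rw [hpre j]
    rw [hstep]
    calc |∑ σ : Equiv.Perm (Fin (n+1)), ∑ t ∈ range n,
            ω (s σ t).1 (A t (fun i : Fin t => s σ i.val) (s σ t).1) (s σ t).2|
        ≤ ∑ σ : Equiv.Perm (Fin (n+1)), |∑ t ∈ range n,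
            ω (s σ t).1 (A t (fun i : Fin t => s σ i.val) (s σ t).1) (s σ t).2| :=
          Finset.abs_sum_le_sum_abs _ _
      _ ≤ ∑ _σ : Equiv.Perm (Fin (n+1)), R n :=
          Finset.sum_le_sum fun σ _ => hregret (s σ) ω hω
      _ = (c : ℝ) * R n := by simp [hc, mul_comm]
  -- conclude the bound on the product integral
  have hInorm : |∫ z, g z ∂(π.prod D)| ≤ R n := by
    have h2 : |∫ T, (∑ σ : Equiv.Perm (Fin (n+1)), g (m σ T)) ∂π'| ≤ (c : ℝ) * R n := by
      have := norm_integral_le_of_norm_le_const (μ := π')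
        (f := fun T => ∑ σ : Equiv.Perm (Fin (n+1)), g (m σ T)) (C := (c : ℝ) * R n)
        (Filter.Eventually.of_forall fun T => by
          simpa [Real.norm_eq_abs] using hpt T)
      simpa [Real.norm_eq_abs] using this
    rw [← hsum, abs_mul, Nat.abs_cast] at h2
    have hcR : (0 : ℝ) < c := by exact_mod_cast hcpos
    nlinarith [abs_nonneg (∫ z, g z ∂(π.prod D))]
  -- Fubini and the final computation
  have hfub : (∫ S : Fin n → (X × Y), ∫ xy : (X × Y), (1 / n : ℝ) * g (S, xy) ∂D ∂π)
      = (1 / n : ℝ) * ∫ z, g z ∂(π.prod D) := by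
    rw [← integral_const_mul]
    exact (integral_prod (fun z => (1 / n : ℝ) * g z) (hInt.const_mul _)).symm
  have hgoal : (∫ S : Fin n → (X × Y), ∫ xy : (X × Y),
      (1 / n : ℝ) * ∑ i : Fin n,
        ω xy.1 (A i.val (fun j => S (Fin.castLE i.isLt.le j)) xy.1) xy.2 ∂D ∂π)
      = (1 / n : ℝ) * ∫ z, g z ∂(π.prod D) := hfub
  rw [hgoal, abs_mul, abs_of_nonneg (by positivity : (0:ℝ) ≤ 1 / n)]
  calc (1 / n : ℝ) * |∫ z, g z ∂(π.prod D)| ≤ (1 / n : ℝ) * R n := by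
        apply mul_le_mul_of_nonneg_left hInorm
        positivity
    _ = R n / n := one_div_mul_eq_div _ _
end

section
/- Suppose $S_{t}(p_{1}) < 0 < S_{t}(p_{2})$ for two points $p_1, p_2$, and let $\tau = \frac{|S_t(p_2)|}{|S_t(p_1)| + |S_t(p_2)|}$. Then $\tau \in (0,1)$ and $\tau S_t(p_1) + (1-\tau) S_t(p_2) = 0$. Moreover, if $\Delta$ is any probability distribution on outcomes $y$ whose CDF is $L$-Lipschitz, and $|p_1 - p_2| \leq \gamma$, then for any $q \in [0,1]$, $\left|\tau\, S_t(p_1)\, \mathbb{E}_{y\sim\Delta}[\mathbf{1}\{y \leq p_1\} - \mathbf{1}\{y \leq p_2\}]\right| \leq |S_t(p_1)| \cdot L \cdot \gamma$, and hence $\mathbb{E}_{p,y}[(\mathbf{1}\{y \leq p\} - q) S_t(p)] \leq |S_t(p_1)| L \gamma$ where $p$ equals $p_1$ with probability $\tau$ and $p_2$ with probability $1-\tau$. -/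
open MeasureTheory in
/-- Randomized anticorrelation search for quantile Defensive Forecasting. -/
theorem stmt_19 (St : ℝ → ℝ) (p1 p2 : ℝ)
    (h1 : St p1 < 0) (h2 : 0 < St p2)
    (τ : ℝ) (hτdef : τ = |St p2| / (|St p1| + |St p2|))
    (Δ : Measure ℝ) [IsProbabilityMeasure Δ] (L : ℝ)
    (hLip : ∀ v v' : ℝ,
      |(Δ (Set.Iic v)).toReal - (Δ (Set.Iic v')).toReal| ≤ L * |v - v'|)
    (γ : ℝ) (hγ : |p1 - p2| ≤ γ) (q : ℝ) (hq : q ∈ Set.Icc (0 : ℝ) 1) :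
    τ ∈ Set.Ioo (0 : ℝ) 1 ∧
    τ * St p1 + (1 - τ) * St p2 = 0 ∧
    |τ * St p1 *
        ∫ y, ((if y ≤ p1 then (1 : ℝ) else 0) - (if y ≤ p2 then (1 : ℝ) else 0)) ∂Δ|
      ≤ |St p1| * L * γ ∧
    τ * ∫ y, ((if y ≤ p1 then (1 : ℝ) else 0) - q) * St p1 ∂Δ +
        (1 - τ) * ∫ y, ((if y ≤ p2 then (1 : ℝ) else 0) - q) * St p2 ∂Δ
      ≤ |St p1| * L * γ := by
  set a := St p1 with ha
  set b := St p2 with hb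
  rw [abs_of_neg h1, abs_of_pos h2] at hτdef
  have hd : (0:ℝ) < -a + b := by linarith
  have hτpos : 0 < τ := by rw [hτdef]; exact div_pos h2 hd
  have hτlt : τ < 1 := by rw [hτdef]; rw [div_lt_one hd]; linarith
  have part2 : τ * a + (1 - τ) * b = 0 := by
    rw [hτdef]; field_simp; ring
  -- integrability
  have hind : ∀ p : ℝ, (fun y : ℝ => if y ≤ p then (1:ℝ) else 0)
      = Set.indicator (Set.Iic p) (fun _ => (1:ℝ)) := by
    intro p; ext y; simp [Set.indicator, Set.mem_Iic]
  have hI : ∀ p : ℝ, Integrable (fun y => if y ≤ p then (1:ℝ) else 0) Δ := by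
    intro p; rw [hind p]; exact (integrable_const 1).indicator measurableSet_Iic
  have key : ∀ p : ℝ, ∫ y, (if y ≤ p then (1:ℝ) else 0) ∂Δ = (Δ (Set.Iic p)).toReal := by
    intro p
    rw [hind p, integral_indicator_const (1:ℝ) measurableSet_Iic]
    simp
    rfl
  set F : ℝ → ℝ := fun p => (Δ (Set.Iic p)).toReal with hF
  have hE : ∀ p c : ℝ, ∫ y, ((if y ≤ p then (1:ℝ) else 0) - q) * c ∂Δ = (F p - q) * c := by
    intro p c
    rw [integral_mul_const, integral_sub (hI p) (integrable_const q), key p, integral_const]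
    simp
    exact Or.inl rfl
  have hD3 : ∫ y, ((if y ≤ p1 then (1:ℝ) else 0) - (if y ≤ p2 then (1:ℝ) else 0)) ∂Δ
      = F p1 - F p2 := by
    rw [integral_sub (hI p1) (hI p2), key p1, key p2]
  have hL0 : 0 ≤ L := by
    have := hLip 0 1
    have h0 : |F 0 - F 1| ≥ 0 := abs_nonneg _
    simp at this
    linarith
  have hD : |F p1 - F p2| ≤ L * γ :=
    (hLip p1 p2).trans (mul_le_mul_of_nonneg_left hγ hL0)
  have part3 : |τ * a * (F p1 - F p2)| ≤ |a| * L * γ := by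
    have heq : |τ * a * (F p1 - F p2)| = τ * |a| * |F p1 - F p2| := by
      rw [abs_mul, abs_mul, abs_of_pos hτpos]
    rw [heq]
    calc τ * |a| * |F p1 - F p2| ≤ 1 * (|a| * |F p1 - F p2|) := by
          rw [mul_assoc]
          exact mul_le_mul_of_nonneg_right hτlt.le
            (mul_nonneg (abs_nonneg _) (abs_nonneg _))
      _ = |a| * |F p1 - F p2| := one_mul _
      _ ≤ |a| * (L * γ) := mul_le_mul_of_nonneg_left hD (abs_nonneg _)
      _ = |a| * L * γ := (mul_assoc _ _ _).symm
  refine ⟨⟨hτpos, hτlt⟩, part2, by rw [hD3]; exact part3, ?_⟩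
  rw [hE p1 a, hE p2 b]
  have h4 : τ * ((F p1 - q) * a) + (1 - τ) * ((F p2 - q) * b) = τ * a * (F p1 - F p2) := by
    linear_combination (F p2 - q) * part2
  rw [h4]
  exact (le_abs_self _).trans part3
end
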